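/- Fix c₀ ≠ 0, ε ∈ {−1, 1}, and 𝔥 : [−1, 1] → ℝ. For any y with 0 < |y| < 1, one has F_ε(0, y) = 0 if and only if ε𝔥(0)·|c₀|·|y| = √(1 − y²), which holds if and only if ε𝔥(0) > 0 and y = ±1/√(1 + c₀²𝔥(0)²). In other words, the nullcline curve F_ε = 0 can meet the axis x = 0 only at the points p_ε and −p_ε. -/

import Mathlib

/-- The function `F_ε` whose zero set is the nullcline `Γ_ε` of the helicoidal
prescribed mean curvature system. -/
noncomputable def helicoidalNullclineF (c₀ ε : ℝ) (𝔥 : ℝ → ℝ) (x y : ℝ) : ℝ :=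
  2 * ε * 𝔥 (x * y / Real.sqrt (c₀ ^ 2 * y ^ 2 + x ^ 2))
      * (x ^ 2 + c₀ ^ 2 * y ^ 2) ^ ((3 : ℝ) / 2)
    - (x ^ 2 + 2 * c₀ ^ 2 * y ^ 2) * Real.sqrt (1 - y ^ 2)

/-- For `0 < |y| < 1`, `F_ε(0, y) = 0` iff
`ε𝔥(0)|c₀||y| = √(1 − y²)`, iff `ε𝔥(0) > 0` and `y = ±1/√(1 + c₀²𝔥(0)²)`;
so the nullcline meets the axis `x = 0` only at `p_ε` and `−p_ε`. -/
theorem helicoidal_nullcline_meets_axis (c₀ ε : ℝ) (hc₀ : c₀ ≠ 0)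
    (hε : ε = 1 ∨ ε = -1) (𝔥 : ℝ → ℝ) :
    ∀ y : ℝ, 0 < |y| → |y| < 1 →
      ((helicoidalNullclineF c₀ ε 𝔥 0 y = 0 ↔
          ε * 𝔥 0 * |c₀| * |y| = Real.sqrt (1 - y ^ 2)) ∧
       (helicoidalNullclineF c₀ ε 𝔥 0 y = 0 ↔
          (0 < ε * 𝔥 0 ∧
            (y = 1 / Real.sqrt (1 + c₀ ^ 2 * (𝔥 0) ^ 2) ∨
             y = -(1 / Real.sqrt (1 + c₀ ^ 2 * (𝔥 0) ^ 2)))))) := by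
  intro y hy0 hy1
  have hε2 : ε ^ 2 = 1 := by rcases hε with h | h <;> simp [h]
  have hy : y ≠ 0 := by simpa [abs_pos] using hy0
  have ht : (0:ℝ) < c₀ ^ 2 * y ^ 2 := by positivity
  have hsy : (0:ℝ) < 1 - y ^ 2 := by
    have := sq_abs y
    nlinarith [hy0, hy1]
  have hsqpos : (0:ℝ) < Real.sqrt (1 - y ^ 2) := Real.sqrt_pos.mpr hsy
  -- rewrite F(0,y)
  have hrw : helicoidalNullclineF c₀ ε 𝔥 0 y
      = 2 * (c₀ ^ 2 * y ^ 2) * (ε * 𝔥 0 * (|c₀| * |y|) - Real.sqrt (1 - y ^ 2)) := by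
    unfold helicoidalNullclineF
    have h32 : (c₀ ^ 2 * y ^ 2) ^ ((3:ℝ)/2)
        = (c₀ ^ 2 * y ^ 2) * (|c₀| * |y|) := by
      rw [show (3:ℝ)/2 = 1 + 1/2 by norm_num, Real.rpow_add ht, Real.rpow_one,
        show (1:ℝ)/2 = (2:ℝ)⁻¹ by norm_num, ← one_div, ← Real.sqrt_eq_rpow,
        Real.sqrt_mul (sq_nonneg c₀), Real.sqrt_sq_eq_abs, Real.sqrt_sq_eq_abs]
    simp only [zero_pow, ne_eq, OfNat.ofNat_ne_zero, not_false_eq_true, zero_add,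
      zero_mul, zero_div, mul_zero]
    rw [h32]; ring
  have first : helicoidalNullclineF c₀ ε 𝔥 0 y = 0 ↔
      ε * 𝔥 0 * |c₀| * |y| = Real.sqrt (1 - y ^ 2) := by
    rw [hrw]
    constructor
    · intro h
      have h2 : ε * 𝔥 0 * (|c₀| * |y|) - Real.sqrt (1 - y ^ 2) = 0 := by
        have h2t : (2 : ℝ) * (c₀ ^ 2 * y ^ 2) ≠ 0 := by positivity
        exact (mul_eq_zero.mp h).resolve_left h2t
      linarith [h2, (by ring : ε * 𝔥 0 * |c₀| * |y| = ε * 𝔥 0 * (|c₀| * |y|))]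
    · intro h
      rw [show ε * 𝔥 0 * (|c₀| * |y|) = ε * 𝔥 0 * |c₀| * |y| by ring, h]
      ring
  refine ⟨first, first.trans ?_⟩
  set s := Real.sqrt (1 + c₀ ^ 2 * (𝔥 0) ^ 2) with hs
  have hspos : (0:ℝ) < s := Real.sqrt_pos.mpr (by positivity)
  have hs2 : s ^ 2 = 1 + c₀ ^ 2 * (𝔥 0) ^ 2 := Real.sq_sqrt (by positivity)
  have hcpos : (0:ℝ) < |c₀| := abs_pos.mpr hc₀
  constructor
  · intro h
    have ha : 0 < ε * 𝔥 0 := by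
      by_contra hle
      push_neg at hle
      have : ε * 𝔥 0 * |c₀| * |y| ≤ 0 := by
        have := mul_nonneg (abs_nonneg c₀) (abs_nonneg y)
        nlinarith
      linarith [hsqpos, h.symm ▸ this]
    have hsq : (ε * 𝔥 0 * |c₀| * |y|) ^ 2 = 1 - y ^ 2 := by
      rw [h]; exact Real.sq_sqrt hsy.le
    have hy2 : y ^ 2 * s ^ 2 = 1 := by
      have h1 : ε ^ 2 * (𝔥 0) ^ 2 * c₀ ^ 2 * y ^ 2 = 1 - y ^ 2 := by
        rw [← hsq]; rw [← sq_abs c₀, ← sq_abs y]; ring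
      rw [hs2]; nlinarith [hε2]
    have habs : |y| = 1 / s := by
      have : |y| ^ 2 = (1 / s) ^ 2 := by
        field_simp
        nlinarith [sq_abs y]
      have h1s : (0:ℝ) < 1 / s := by positivity
      nlinarith [abs_nonneg y, this]
    exact ⟨ha, abs_eq (by positivity : (0:ℝ) ≤ 1 / s) |>.mp habs⟩
  · rintro ⟨ha, hyy⟩
    have habs : |y| = 1 / s := by
      rcases hyy with h | h <;> rw [h] <;> simp [abs_of_pos, hspos,
        abs_of_nonneg (le_of_lt (by positivity : (0:ℝ) < 1 / s))]
    have hy2 : y ^ 2 = 1 / s ^ 2 := by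
      rw [← sq_abs y, habs]; ring
    have key : 1 - y ^ 2 = (ε * 𝔥 0 * |c₀| * |y|) ^ 2 := by
      rw [habs, hy2]
      have h3 : (ε * 𝔥 0 * |c₀| * (1/s)) ^ 2 = ε^2 * (𝔥 0)^2 * c₀^2 / s^2 := by
        field_simp; rw [sq_abs]
      rw [h3, hε2, hs2]
      field_simp
      ring
    rw [key, Real.sqrt_sq (by positivity)]
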